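/- There exist entire functions f₁, f₂ : ℂ → ℂ, a number δ ∈ (0,1), and strictly increasing sequences (δ_k), (l_k) of positive reals tending to ∞ such that the sets B_k' = {(z,w) ∈ ℂ × ℝ : |z − δ_k| ≤ l_k, |w| < l_k/(8δ)} have nonempty interior, are pairwise disjoint, and satisfy F(B_k') ⊆ B_k' for every k ∈ ℕ; that is, F admits infinitely many pairwise disjoint forward-invariant polydiscs in ℂ × ℝ. -/

import Mathlib

open Set Filter Topology Finset


noncomputable def cc (n : ℕ) : ℝ := 10 * Real.exp (-(10 * (n + 1)))

noncomputable def gg (n : ℕ) (z : ℂ) : ℂ := 1 - Complex.exp (-(cc n : ℂ) * z)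

noncomputable def ff (z : ℂ) : ℂ := 10 * ∑' n : ℕ, gg n z

lemma cc_pos (n : ℕ) : 0 < cc n := by unfold cc; positivity

lemma cc_add (N n : ℕ) : cc (n + N) = cc N * Real.exp (-(10 * n)) := by
  simp only [cc]
  rw [mul_assoc, ← Real.exp_add]
  push_cast
  ring_nf

lemma gg_bound {n : ℕ} {z : ℂ} (h : cc n * ‖z‖ ≤ 1) :
    ‖gg n z‖ ≤ 2 * (cc n * ‖z‖) := by
  have hw : ‖-(cc n : ℂ) * z‖ = cc n * ‖z‖ := by
    rw [norm_mul, norm_neg, Complex.norm_real, Real.norm_eq_abs, abs_of_pos (cc_pos n)]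
  have := Complex.norm_exp_sub_one_le (x := -(cc n : ℂ) * z) (by rw [hw]; exact h)
  rw [hw] at this
  calc ‖gg n z‖ = ‖Complex.exp (-(cc n : ℂ) * z) - 1‖ := by
        rw [gg, ← norm_neg]; ring_nf
    _ ≤ 2 * (cc n * ‖z‖) := this

lemma exp_neg_ten_lt_one : Real.exp (-10) < 1 := by
  rw [Real.exp_lt_one_iff]; norm_num

lemma cc_small {M : ℝ} (N : ℕ) (hM : M ≤ N + 1) : cc N * M ≤ 1 := by
  unfold cc
  have hp : (0:ℝ) < Real.exp (10 * (N + 1)) := Real.exp_pos _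
  have h1 : 10 * ((N:ℝ) + 1) + 1 ≤ Real.exp (10 * (N + 1)) := Real.add_one_le_exp _
  rw [Real.exp_neg]
  have : 10 * (Real.exp (10 * ((N:ℝ) + 1)))⁻¹ * M = (10 * M) / Real.exp (10 * (N + 1)) := by
    ring
  rw [this, div_le_one hp]
  nlinarith

lemma tail_term_bound (N : ℕ) {z : ℂ} (h : cc N * ‖z‖ ≤ 1) (n : ℕ) :
    ‖gg (n + N) z‖ ≤ 2 * (cc N * ‖z‖) * Real.exp (-10) ^ n := by
  have hkey : cc (n + N) * ‖z‖ = cc N * ‖z‖ * Real.exp (-10) ^ n := by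
    rw [cc_add, ← Real.exp_nat_mul]
    ring_nf
  have h0 : (0:ℝ) ≤ Real.exp (-10) ^ n := by positivity
  have hle : Real.exp (-10) ^ n ≤ 1 :=
    pow_le_one₀ (Real.exp_nonneg _) exp_neg_ten_lt_one.le
  have h1 : cc (n + N) * ‖z‖ ≤ 1 := by
    rw [hkey]
    calc cc N * ‖z‖ * Real.exp (-10) ^ n ≤ 1 * 1 := by
          exact mul_le_mul h hle h0 zero_le_one
      _ = 1 := by norm_num
  calc ‖gg (n + N) z‖ ≤ 2 * (cc (n + N) * ‖z‖) := gg_bound h1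
    _ = 2 * (cc N * ‖z‖) * Real.exp (-10) ^ n := by rw [hkey]; ring

lemma summable_norm_tail (N : ℕ) {z : ℂ} (h : cc N * ‖z‖ ≤ 1) :
    Summable (fun n => ‖gg (n + N) z‖) := by
  apply Summable.of_nonneg_of_le (fun n => norm_nonneg _) (tail_term_bound N h)
  exact (summable_geometric_of_lt_one (Real.exp_nonneg _) exp_neg_ten_lt_one).mul_left _

lemma summable_gg (z : ℂ) : Summable (fun n => gg n z) := by
  set N := ⌈‖z‖⌉₊ with hN
  have h : cc N * ‖z‖ ≤ 1 :=
    cc_small N (le_trans (Nat.le_ceil _) (le_add_of_nonneg_right zero_le_one))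
  exact (summable_nat_add_iff N).mp ((summable_norm_tail N h).of_norm)

lemma tail_tsum_bound (N : ℕ) {z : ℂ} (h : cc N * ‖z‖ ≤ 1) :
    ‖∑' n, gg (n + N) z‖ ≤ 2 * (cc N * ‖z‖) * (1 - Real.exp (-10))⁻¹ := by
  have hgeom : Summable (fun n : ℕ => 2 * (cc N * ‖z‖) * Real.exp (-10) ^ n) :=
    (summable_geometric_of_lt_one (Real.exp_nonneg _) exp_neg_ten_lt_one).mul_left _
  calc ‖∑' n, gg (n + N) z‖ ≤ ∑' n, ‖gg (n + N) z‖ :=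
        norm_tsum_le_tsum_norm (summable_norm_tail N h)
    _ ≤ ∑' n : ℕ, 2 * (cc N * ‖z‖) * Real.exp (-10) ^ n :=
        Summable.tsum_le_tsum (tail_term_bound N h) (summable_norm_tail N h) hgeom
    _ = 2 * (cc N * ‖z‖) * ∑' n : ℕ, Real.exp (-10) ^ n := tsum_mul_left
    _ = 2 * (cc N * ‖z‖) * (1 - Real.exp (-10))⁻¹ := by
        rw [tsum_geometric_of_lt_one (Real.exp_nonneg _) exp_neg_ten_lt_one]


lemma exp10_ge : (20000 : ℝ) ≤ Real.exp 10 := by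
  have h : (2.7182818283 : ℝ) ^ (10:ℕ) ≤ Real.exp 1 ^ (10:ℕ) :=
    pow_le_pow_left₀ (by norm_num) Real.exp_one_gt_d9.le 10
  rw [Real.exp_one_pow] at h
  norm_num at h
  linarith

lemma exp9_ge : (8000 : ℝ) ≤ Real.exp 9 := by
  have h : (2.7182818283 : ℝ) ^ (9:ℕ) ≤ Real.exp 1 ^ (9:ℕ) :=
    pow_le_pow_left₀ (by norm_num) Real.exp_one_gt_d9.le 9
  rw [Real.exp_one_pow] at h
  norm_num at h
  linarith



lemma gg_differentiable (n : ℕ) : Differentiable ℂ (gg n) := by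
  unfold gg; fun_prop

lemma ff_differentiable : Differentiable ℂ ff := by
  intro z₀
  set M : ℝ := ‖z₀‖ + 1 with hM
  set N := ⌈M⌉₊ with hNdef
  have hMN : M ≤ (N:ℝ) + 1 := le_trans (Nat.le_ceil M) (le_add_of_nonneg_right zero_le_one)
  have hccM : cc N * M ≤ 1 := cc_small N hMN
  have hz₀ : z₀ ∈ Metric.ball (0:ℂ) M := by
    simp only [Metric.mem_ball, Complex.dist_eq, sub_zero, hM]
    linarith [norm_nonneg z₀]
  have htail : DifferentiableOn ℂ (fun z => ∑' n, gg (n + N) z) (Metric.ball (0:ℂ) M) := by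
    apply Complex.differentiableOn_tsum_of_summable_norm
      (u := fun n => 2 * (cc N * M) * Real.exp (-10) ^ n)
    · exact (summable_geometric_of_lt_one (Real.exp_nonneg _) exp_neg_ten_lt_one).mul_left _
    · exact fun i => (gg_differentiable _).differentiableOn
    · exact Metric.isOpen_ball
    · intro n w hw
      have hwM : ‖w‖ ≤ M := by
        simp only [Metric.mem_ball, Complex.dist_eq, sub_zero] at hw
        linarith
      have h1 : cc N * ‖w‖ ≤ 1 :=
        le_trans (mul_le_mul_of_nonneg_left hwM (cc_pos N).le) hccM
      calc ‖gg (n + N) w‖ ≤ 2 * (cc N * ‖w‖) * Real.exp (-10) ^ n :=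
            tail_term_bound N h1 n
        _ ≤ 2 * (cc N * M) * Real.exp (-10) ^ n := by
            have : cc N * ‖w‖ ≤ cc N * M :=
              mul_le_mul_of_nonneg_left hwM (cc_pos N).le
            have h2 : (0:ℝ) ≤ Real.exp (-10) ^ n := by positivity
            nlinarith
  have hfin : DifferentiableOn ℂ
      (fun z => (10:ℂ) * ((∑ n ∈ Finset.range N, gg n z) + ∑' n, gg (n + N) z))
      (Metric.ball (0:ℂ) M) := by
    apply DifferentiableOn.const_mul
    exact (DifferentiableOn.fun_sum fun i _ => (gg_differentiable i).differentiableOn).add htail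
  have heq : ∀ z ∈ Metric.ball (0:ℂ) M,
      ff z = (10:ℂ) * ((∑ n ∈ Finset.range N, gg n z) + ∑' n, gg (n + N) z) := by
    intro z _
    unfold ff
    congr 1
    exact ((summable_gg z).sum_add_tsum_nat_add N).symm
  exact ((hfin.congr heq).differentiableAt (Metric.isOpen_ball.mem_nhds hz₀))


lemma exp_neg_ten_le : Real.exp (-10) ≤ 1/20000 := by
  rw [Real.exp_neg]
  rw [inv_le_comm₀ (Real.exp_pos _) (by norm_num)]
  simpa using exp10_ge

lemma exp_neg_nine_le : Real.exp (-9) ≤ 1/8000 := by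
  rw [Real.exp_neg]
  rw [inv_le_comm₀ (Real.exp_pos _) (by norm_num)]
  simpa using exp9_ge

lemma exp_neg_nine_lt_one : Real.exp (-9) < 1 := by
  rw [Real.exp_lt_one_iff]; norm_num

set_option maxHeartbeats 2000000 in
lemma main_estimate (k : ℕ) {z : ℂ}
    (hz : ‖z - (Real.exp (10 * (k + 1)) : ℝ)‖ ≤ Real.exp (10 * (k + 1)) / 10) :
    ‖Complex.exp (ff z) + ((1/2 : ℝ) : ℂ) - (Real.exp (10 * (k + 1)) : ℝ)‖ ≤
      Real.exp (10 * (k + 1)) / 10 := by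
  set x : ℝ := Real.exp (10 * ((k:ℝ) + 1)) with hxdef
  have hx : 0 < x := Real.exp_pos _
  have hx20 : 20000 ≤ x := by
    refine le_trans exp10_ge (Real.exp_le_exp.mpr ?_)
    have : (0:ℝ) ≤ (k:ℝ) := Nat.cast_nonneg k
    nlinarith
  -- real part and modulus bounds for z
  have hre1 : |((x:ℂ) - z).re| ≤ ‖(x:ℂ) - z‖ := Complex.abs_re_le_norm _
  have hre2 : ‖(x:ℂ) - z‖ ≤ x / 10 := by
    rw [norm_sub_rev]; exact hz
  have hre3 : ((x:ℂ) - z).re = x - z.re := by simp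
  have hrez : 9/10 * x ≤ z.re := by
    rw [hre3] at hre1
    rcases abs_le.mp (le_trans hre1 hre2) with ⟨h1, h2⟩
    linarith
  have habsz : ‖z‖ ≤ 11/10 * x := by
    calc ‖z‖ = ‖(z - (x:ℂ)) + (x:ℂ)‖ := by ring_nf
      _ ≤ ‖z - (x:ℂ)‖ + ‖(x:ℂ)‖ := norm_add_le _ _
      _ ≤ x/10 + x := by
          rw [Complex.norm_real, Real.norm_eq_abs, abs_of_pos hx]
          exact add_le_add hz le_rfl
      _ = 11/10 * x := by ring
  have habsz0 : 0 ≤ ‖z‖ := norm_nonneg z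
  -- tail control
  have hccval : cc (k+1) = 10 * Real.exp (-(10 * ((k:ℝ) + 2))) := by
    unfold cc; push_cast; ring_nf
  have hexpmul : Real.exp (-(10 * ((k:ℝ) + 2))) * x = Real.exp (-10) := by
    rw [hxdef, ← Real.exp_add]; ring_nf
  have hccz : cc (k+1) * ‖z‖ ≤ 11 * Real.exp (-10) := by
    have h1 : cc (k+1) * ‖z‖ ≤ cc (k+1) * (11/10 * x) :=
      mul_le_mul_of_nonneg_left habsz (cc_pos _).le
    rw [hccval] at h1 ⊢
    nlinarith [Real.exp_pos (-(10 * ((k:ℝ) + 2))), hexpmul]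
  have hccz1 : cc (k+1) * ‖z‖ ≤ 1 := by
    nlinarith [exp_neg_ten_le, Real.exp_pos (-10:ℝ)]
  set T : ℂ := ∑' n, gg (n + (k+1)) z with hTdef
  have hT : ‖T‖ ≤ 1/400 := by
    have h1 := tail_tsum_bound (k+1) hccz1
    have hinv : (1 - Real.exp (-10))⁻¹ ≤ 2 := by
      rw [inv_le_comm₀ (by linarith [exp_neg_ten_lt_one, exp_neg_ten_le]) (by norm_num)]
      linarith [exp_neg_ten_le]
    have h2 : 2 * (cc (k+1) * ‖z‖) * (1 - Real.exp (-10))⁻¹ ≤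
        2 * (11 * Real.exp (-10)) * 2 := by
      have hpos : (0:ℝ) < 1 - Real.exp (-10) := by linarith [exp_neg_ten_le]
      nlinarith [mul_nonneg (cc_pos (k+1)).le habsz0, inv_nonneg.mpr hpos.le]
    calc ‖T‖ ≤ _ := h1
      _ ≤ 2 * (11 * Real.exp (-10)) * 2 := h2
      _ ≤ 1/400 := by nlinarith [exp_neg_ten_le, Real.exp_pos (-10:ℝ)]
  -- head control
  set H : ℂ := ∑ n ∈ Finset.range (k+1), Complex.exp (-(cc n : ℂ) * z) with hHdef
  have hH : ‖H‖ ≤ 1/4000 := by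
    set r : ℝ := Real.exp (-9) with hrdef
    have hr0 : 0 ≤ r := Real.exp_nonneg _
    have hr1 : r < 1 := exp_neg_nine_lt_one
    have hterm : ∀ n ∈ Finset.range (k+1),
        ‖Complex.exp (-(cc n : ℂ) * z)‖ ≤ r ^ ((k - n) + 1) := by
      intro n hn
      have hnk : n ≤ k := Nat.lt_succ_iff.mp (Finset.mem_range.mp hn)
      obtain ⟨m, hm⟩ := Nat.exists_eq_add_of_le hnk
      have hkn : k - n = m := by omega
      have hre : (-(cc n : ℂ) * z).re = -(cc n * z.re) := by
        simp [Complex.ofReal_re]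
      rw [Complex.norm_exp, hre]
      have hczre : 9 * ((m:ℝ) + 1) ≤ cc n * z.re := by
        have hz9 : cc n * (9/10 * x) ≤ cc n * z.re :=
          mul_le_mul_of_nonneg_left hrez (cc_pos n).le
        have hEE : Real.exp (-(10 * ((n:ℝ) + 1))) * Real.exp (10 * ((k:ℝ) + 1)) =
            Real.exp (10 * (m:ℝ)) := by
          rw [← Real.exp_add]
          congr 1
          have hk : (k:ℝ) = (n:ℝ) + (m:ℝ) := by exact_mod_cast congrArg Nat.cast hm
          rw [hk]; ring
        have hcx : cc n * (9/10 * x) = 9 * Real.exp (10 * (m:ℝ)) := by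
          calc cc n * (9/10 * x)
              = 9 * (Real.exp (-(10 * ((n:ℝ) + 1))) * Real.exp (10 * ((k:ℝ) + 1))) := by
                unfold cc; rw [hxdef]; ring
            _ = 9 * Real.exp (10 * (m:ℝ)) := by rw [hEE]
        have hem : (m:ℝ) + 1 ≤ Real.exp (10 * (m:ℝ)) := by
          have h1 : 10 * (m:ℝ) + 1 ≤ Real.exp (10 * (m:ℝ)) := Real.add_one_le_exp _
          have : (0:ℝ) ≤ (m:ℝ) := Nat.cast_nonneg m
          linarith
        nlinarith
      rw [hkn]
      calc Real.exp (-(cc n * z.re)) ≤ Real.exp (-(9 * ((m:ℝ) + 1))) :=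
            Real.exp_le_exp.mpr (by linarith)
        _ = r ^ (m + 1) := by
            rw [hrdef, ← Real.exp_nat_mul]
            congr 1
            push_cast
            ring
    have hsum : ‖H‖ ≤ ∑ n ∈ Finset.range (k+1), r ^ ((k - n) + 1) :=
      le_trans (norm_sum_le _ _) (Finset.sum_le_sum hterm)
    have hreflect : ∑ n ∈ Finset.range (k+1), r ^ ((k - n) + 1) =
        ∑ j ∈ Finset.range (k+1), r ^ (j + 1) := by
      have := Finset.sum_range_reflect (fun j => r ^ (j + 1)) (k+1)
      simpa using this
    have hgeomsum : ∑ j ∈ Finset.range (k+1), r ^ (j + 1) ≤ r * (1 - r)⁻¹ := by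
      have h1 : ∑ j ∈ Finset.range (k+1), r ^ (j + 1) =
          r * ∑ j ∈ Finset.range (k+1), r ^ j := by
        rw [Finset.mul_sum]
        exact Finset.sum_congr rfl fun j _ => by ring
      rw [h1]
      have h2 : ∑ j ∈ Finset.range (k+1), r ^ j ≤ (1 - r)⁻¹ := by
        have h3 := Summable.sum_le_tsum (Finset.range (k+1)) (fun i _ => pow_nonneg hr0 i)
          (summable_geometric_of_lt_one hr0 hr1)
        rwa [tsum_geometric_of_lt_one hr0 hr1] at h3
      exact mul_le_mul_of_nonneg_left h2 hr0
    have hinv : (1 - r)⁻¹ ≤ 2 := by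
      rw [inv_le_comm₀ (by linarith [exp_neg_nine_le]) (by norm_num)]
      linarith [exp_neg_nine_le]
    calc ‖H‖ ≤ ∑ n ∈ Finset.range (k+1), r ^ ((k - n) + 1) := hsum
      _ = ∑ j ∈ Finset.range (k+1), r ^ (j + 1) := hreflect
      _ ≤ r * (1 - r)⁻¹ := hgeomsum
      _ ≤ (1/8000) * 2 := by
          apply mul_le_mul exp_neg_nine_le hinv (inv_nonneg.mpr (by linarith [exp_neg_nine_le])) (by norm_num)
      _ ≤ 1/4000 := by norm_num
  -- assemble
  have hhead : ∑ n ∈ Finset.range (k+1), gg n z = ((k:ℂ) + 1) - H := by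
    unfold gg
    rw [Finset.sum_sub_distrib, Finset.sum_const, Finset.card_range, hHdef]
    push_cast
    ring
  have hsplit := (summable_gg z).sum_add_tsum_nat_add (k+1)
  set ε : ℂ := 10 * (T - H) with hεdef
  have hffz : ff z = ((10 * ((k:ℝ) + 1) : ℝ) : ℂ) + ε := by
    unfold ff
    rw [← hsplit, hhead]
    push_cast
    ring
  have hexpff : Complex.exp (ff z) = (x:ℂ) * Complex.exp ε := by
    rw [hffz, Complex.exp_add, hxdef, ← Complex.ofReal_exp]
  have hε : ‖ε‖ ≤ 1/30 := by
    rw [hεdef]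
    calc ‖10 * (T - H)‖ = 10 * ‖T - H‖ := by
          rw [norm_mul]; norm_num
      _ ≤ 10 * (‖T‖ + ‖H‖) := by
          have h := norm_sub_le T H
          nlinarith
      _ ≤ 1/30 := by nlinarith
  have hε1 : ‖ε‖ ≤ 1 := by linarith
  have hexpε : ‖Complex.exp ε - 1‖ ≤ 1/15 := by
    have := Complex.norm_exp_sub_one_le hε1
    linarith
  have hfinal : ‖(x:ℂ) * Complex.exp ε + ((1/2:ℝ):ℂ) - (x:ℂ)‖ ≤ x / 10 := by
    have heq : (x:ℂ) * Complex.exp ε + ((1/2:ℝ):ℂ) - (x:ℂ) =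
        (x:ℂ) * (Complex.exp ε - 1) + ((1/2:ℝ):ℂ) := by ring
    rw [heq]
    calc ‖(x:ℂ) * (Complex.exp ε - 1) + ((1/2:ℝ):ℂ)‖
        ≤ ‖(x:ℂ) * (Complex.exp ε - 1)‖ + ‖((1/2:ℝ):ℂ)‖ :=
          norm_add_le _ _
      _ = x * ‖Complex.exp ε - 1‖ + 1/2 := by
          rw [norm_mul, Complex.norm_real, Complex.norm_real, Real.norm_eq_abs, Real.norm_eq_abs, abs_of_pos hx]
          norm_num
      _ ≤ x * (1/15) + 1/2 := by
          have := mul_le_mul_of_nonneg_left hexpε hx.le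
          linarith
      _ ≤ x / 10 := by linarith
  rw [hexpff]
  exact hfinal


/-- Core of the first Proposition: there are entire `f₁, f₂`, `δ ∈ (0,1)` and sequences
`δₖ, lₖ` such that the map `F(z,w) = (e^{f₁(z)} + δ e^{Re f₂(w)}, e^{Re f₂(w)})` admits
infinitely many pairwise disjoint forward-invariant polydiscs `Bₖ'` in `ℂ × ℝ`. -/
theorem exists_map_with_invariant_polydiscs :
    ∃ (f₁ f₂ : ℂ → ℂ) (δ : ℝ) (δs ls : ℕ → ℝ),
      Differentiable ℂ f₁ ∧ Differentiable ℂ f₂ ∧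
      δ ∈ Set.Ioo (0 : ℝ) 1 ∧
      StrictMono δs ∧ (∀ k, 0 < δs k) ∧ Tendsto δs atTop atTop ∧
      StrictMono ls ∧ (∀ k, 0 < ls k) ∧ Tendsto ls atTop atTop ∧
      (∀ k, (interior {p : ℂ × ℝ |
        ‖p.1 - δs k‖ ≤ ls k ∧ |p.2| < ls k / (8 * δ)}).Nonempty) ∧
      (∀ i j, i ≠ j →
        Disjoint {p : ℂ × ℝ | ‖p.1 - δs i‖ ≤ ls i ∧ |p.2| < ls i / (8 * δ)}
          {p : ℂ × ℝ | ‖p.1 - δs j‖ ≤ ls j ∧ |p.2| < ls j / (8 * δ)}) ∧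
      (∀ k, (fun p : ℂ × ℝ =>
          ((Complex.exp (f₁ p.1) + (δ * Real.exp ((f₂ (p.2 : ℂ)).re) : ℝ),
            Real.exp ((f₂ (p.2 : ℂ)).re)) : ℂ × ℝ)) ''
          {p : ℂ × ℝ | ‖p.1 - δs k‖ ≤ ls k ∧ |p.2| < ls k / (8 * δ)} ⊆
          {p : ℂ × ℝ | ‖p.1 - δs k‖ ≤ ls k ∧ |p.2| < ls k / (8 * δ)}) := by
  refine ⟨ff, fun _ => 0, 1/2, fun k => Real.exp (10 * ((k:ℝ) + 1)),
    fun k => Real.exp (10 * ((k:ℝ) + 1)) / 10, ff_differentiable, differentiable_const 0,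
    by norm_num, ?_, ?_, ?_, ?_, ?_, ?_, ?_, ?_, ?_⟩
  · -- StrictMono δs
    intro a b hab
    exact Real.exp_lt_exp.mpr (by have : (a:ℝ) < b := Nat.cast_lt.mpr hab; linarith)
  · exact fun k => Real.exp_pos _
  · -- Tendsto δs
    apply Real.tendsto_exp_atTop.comp
    apply tendsto_atTop_mono (fun k : ℕ => by
      have : (0:ℝ) ≤ (k:ℝ) := Nat.cast_nonneg k
      linarith : ∀ k : ℕ, (k:ℝ) ≤ 10 * ((k:ℝ) + 1))
    exact tendsto_natCast_atTop_atTop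
  · -- StrictMono ls
    intro a b hab
    have : Real.exp (10 * ((a:ℝ) + 1)) < Real.exp (10 * ((b:ℝ) + 1)) :=
      Real.exp_lt_exp.mpr (by have : (a:ℝ) < b := Nat.cast_lt.mpr hab; linarith)
    linarith
  · exact fun k => by positivity
  · -- Tendsto ls
    apply Tendsto.atTop_div_const (by norm_num : (0:ℝ) < 10)
    apply Real.tendsto_exp_atTop.comp
    apply tendsto_atTop_mono (fun k : ℕ => by
      have : (0:ℝ) ≤ (k:ℝ) := Nat.cast_nonneg k
      linarith : ∀ k : ℕ, (k:ℝ) ≤ 10 * ((k:ℝ) + 1))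
    exact tendsto_natCast_atTop_atTop
  · -- interior nonempty
    intro k
    set x : ℝ := Real.exp (10 * ((k:ℝ) + 1)) with hxdef
    have hx : 0 < x := Real.exp_pos _
    refine ⟨((x:ℂ), 0), ?_⟩
    rw [mem_interior]
    refine ⟨(Metric.ball (x:ℂ) (x/10)) ×ˢ (Metric.ball (0:ℝ) (x/10 / (8 * (1/2)))), ?_,
      (Metric.isOpen_ball).prod Metric.isOpen_ball, ?_⟩
    · rintro p ⟨hp1, hp2⟩
      rw [Metric.mem_ball, Complex.dist_eq] at hp1
      rw [Metric.mem_ball, Real.dist_eq, sub_zero] at hp2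
      exact ⟨hp1.le, hp2⟩
    · constructor
      · rw [Metric.mem_ball]; simp [hx]
      · rw [Metric.mem_ball, Real.dist_eq, sub_zero]
        simp only [abs_zero]
        positivity
  · -- disjoint
    have key : ∀ i j : ℕ, i < j →
        Disjoint {p : ℂ × ℝ | ‖p.1 - (Real.exp (10 * ((i:ℝ) + 1)) : ℝ)‖ ≤
            Real.exp (10 * ((i:ℝ) + 1)) / 10 ∧
            |p.2| < Real.exp (10 * ((i:ℝ) + 1)) / 10 / (8 * (1/2))}
          {p : ℂ × ℝ | ‖p.1 - (Real.exp (10 * ((j:ℝ) + 1)) : ℝ)‖ ≤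
            Real.exp (10 * ((j:ℝ) + 1)) / 10 ∧
            |p.2| < Real.exp (10 * ((j:ℝ) + 1)) / 10 / (8 * (1/2))} := by
      intro i j hij
      rw [Set.disjoint_left]
      rintro p ⟨h1, -⟩ ⟨h2, -⟩
      set a : ℝ := Real.exp (10 * ((i:ℝ) + 1)) with hadef
      set b : ℝ := Real.exp (10 * ((j:ℝ) + 1)) with hbdef
      have ha : 0 < a := Real.exp_pos _
      have hb : 0 < b := Real.exp_pos _
      have hab : a * 20000 ≤ b := by
        calc a * 20000 ≤ a * Real.exp 10 := by nlinarith [exp10_ge]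
          _ = Real.exp (10 * ((i:ℝ) + 1) + 10) := by rw [hadef, ← Real.exp_add]
          _ ≤ b := Real.exp_le_exp.mpr (by
              have : (i:ℝ) + 1 ≤ (j:ℝ) := by exact_mod_cast Nat.succ_le_of_lt hij
              linarith)
      have htri : |a - b| ≤ a / 10 + b / 10 := by
        have : ((a:ℝ):ℂ) - ((b:ℝ):ℂ) = (↑a - p.1) + (p.1 - ↑b) := by ring
        calc |a - b| = ‖(((a - b : ℝ)):ℂ)‖ := by rw [Complex.norm_real, Real.norm_eq_abs]
          _ = ‖(↑a - p.1) + (p.1 - ↑b)‖ := by rw [Complex.ofReal_sub, this]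
          _ ≤ ‖↑a - p.1‖ + ‖p.1 - ↑b‖ := norm_add_le _ _
          _ = ‖p.1 - ↑a‖ + ‖p.1 - ↑b‖ := by
              rw [norm_sub_rev]
          _ ≤ a / 10 + b / 10 := add_le_add h1 h2
      rw [abs_sub_comm, abs_of_pos (by nlinarith)] at htri
      nlinarith
    intro i j hij
    rcases lt_or_gt_of_ne hij with h | h
    · exact key i j h
    · exact (key j i h).symm
  · -- invariance
    intro k
    rintro p ⟨q, ⟨hq1, -⟩, rfl⟩
    have h0 : (((fun _ => (0:ℂ)) ((q.2 : ℝ) : ℂ)).re) = 0 := rfl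
    constructor
    · show ‖Complex.exp (ff q.1) +
        ((1/2 * Real.exp (((0:ℂ)).re) : ℝ) : ℂ) - _‖ ≤ _
      have : (1/2 : ℝ) * Real.exp ((0:ℂ).re) = 1/2 := by simp
      rw [this]
      exact main_estimate k hq1
    · show |Real.exp ((0:ℂ).re)| < Real.exp (10 * ((k:ℝ) + 1)) / 10 / (8 * (1/2))
      have hk : Real.exp 10 ≤ Real.exp (10 * ((k:ℝ) + 1)) :=
        Real.exp_le_exp.mpr (by have : (0:ℝ) ≤ (k:ℝ) := Nat.cast_nonneg k; linarith)
      simp only [Complex.zero_re, Real.exp_zero, abs_one]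
      have := exp10_ge
      rw [show (8 : ℝ) * (1/2) = 4 by norm_num]
      rw [lt_div_iff₀ (by norm_num : (0:ℝ) < 4)]
      rw [lt_div_iff₀ (by norm_num : (0:ℝ) < 10)]
      linarith
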